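/- arXiv:2601.09477 — 3 statements merged into one kernel-verified Lean document; each statement's English description precedes it below -/
import Mathlib

section
/- Under the hypotheses of the FWHT compressed matrix multiplication setup — n ≥ 1, b = 2^m, C = A * B for A, B : Matrix (Fin n) (Fin n) ℝ, mutually independent H1, H2 : Ω → (Fin n → Fin b) and S1, S2 : Ω → (Fin n → {-1,1}), each of H1, H2 a pairwise independent uniform family and each of S1, S2 a pairwise independent uniform family of random signs, with estimator X̃(i,j) = S1(i)·S2(j)·P[H1(i) XOR H2(j)] where P[k] = Σ_{(i',j') : H1(i') XOR H2(j') = k} S1(i')·S2(j')·C[i'][j'] — for every (i,j), Pr[X̃(i,j) ≠ C[i][j]] ≤ nnz(C) / b, where nnz(C) is the number of nonzero entries of C. In particular, when the product matrix is sparse the estimate is exact with high probability for b sufficiently large. -/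
open MeasureTheory
open scoped ENNReal ProbabilityTheory

/-- Bitwise XOR on `Fin (2^m)`. -/
def fxor {m : ℕ} (i j : Fin (2^m)) : Fin (2^m) :=
  ⟨i.val ^^^ j.val, Nat.xor_lt_two_pow i.isLt j.isLt⟩

/-- The FWHT compressed-product sketch of a matrix `C` under hash functions
`h1, h2` and sign functions `s1, s2`:
`p[k] = Σ_{h1(i') ⊕ h2(j') = k} s1(i')·s2(j')·C[i'][j']`. -/
def sketch {n m : ℕ} (C : Matrix (Fin n) (Fin n) ℝ)
    (h1 h2 : Fin n → Fin (2^m)) (s1 s2 : Fin n → ℝ) : Fin (2^m) → ℝ :=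
  fun k => ∑ p ∈ Finset.univ.filter
      (fun p : Fin n × Fin n => fxor (h1 p.1) (h2 p.2) = k),
    s1 p.1 * s2 p.2 * C p.1 p.2

/-- The decompressed estimate of entry `(i,j)`:
`s1(i)·s2(j)·p[h1(i) ⊕ h2(j)]`. -/
def estimate {n m : ℕ} (C : Matrix (Fin n) (Fin n) ℝ)
    (h1 h2 : Fin n → Fin (2^m)) (s1 s2 : Fin n → ℝ) (i j : Fin n) : ℝ :=
  s1 i * s2 j * sketch C h1 h2 s1 s2 (fxor (h1 i) (h2 j))


section Aux

lemma fxor_cancel_right {m : ℕ} (x a : Fin (2^m)) : fxor (fxor x a) a = x := by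
  simp [fxor, Nat.xor_xor_cancel_right]

lemma fxor_left_cancel {m : ℕ} {a x y : Fin (2^m)} (h : fxor a x = fxor a y) : x = y := by
  have hx : ∀ u v : Fin (2^m), fxor u v = fxor v u := by
    intro u v; simp [fxor, Nat.xor_comm]
  rw [hx a x, hx a y] at h
  have := congrArg (fun z => fxor z a) h
  simpa [fxor_cancel_right] using this

lemma fxor_eq_iff {m : ℕ} {a b x y : Fin (2^m)} :
    fxor x a = fxor y b ↔ x = fxor (fxor y b) a := by
  constructor
  · intro h; rw [← h, fxor_cancel_right]
  · intro h; rw [h, fxor_cancel_right]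

lemma estimate_eq_of_no_collision {n m : ℕ} (C : Matrix (Fin n) (Fin n) ℝ)
    (h1 h2 : Fin n → Fin (2^m)) (s1 s2 : Fin n → ℝ) (i j : Fin n)
    (hs1 : s1 i = -1 ∨ s1 i = 1) (hs2 : s2 j = -1 ∨ s2 j = 1)
    (h : ∀ p : Fin n × Fin n, p ≠ (i, j) → C p.1 p.2 ≠ 0 →
      fxor (h1 p.1) (h2 p.2) ≠ fxor (h1 i) (h2 j)) :
    estimate C h1 h2 s1 s2 i j = C i j := by
  have hsk : sketch C h1 h2 s1 s2 (fxor (h1 i) (h2 j)) = s1 i * s2 j * C i j := by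
    unfold sketch
    apply Finset.sum_eq_single_of_mem (i, j)
    · simp
    · intro p hp hne
      rcases Finset.mem_filter.mp hp with ⟨-, hcol⟩
      by_cases hc : C p.1 p.2 = 0
      · simp [hc]
      · exact absurd hcol (h p hne hc)
  unfold estimate
  rw [hsk]
  have h1sq : s1 i * s1 i = 1 := by rcases hs1 with h|h <;> rw [h] <;> ring
  have h2sq : s2 j * s2 j = 1 := by rcases hs2 with h|h <;> rw [h] <;> ring
  calc s1 i * s2 j * (s1 i * s2 j * C i j) = (s1 i * s1 i) * (s2 j * s2 j) * C i j := by ring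
  _ = C i j := by rw [h1sq, h2sq]; ring

lemma prob_mem_finset {Ω α : Type*} [MeasureSpace Ω] [MeasurableSpace α]
    [MeasurableSingletonClass α] (X : Ω → α) (hm : Measurable X) (s : Finset α) :
    ℙ {ω | X ω ∈ s} = ∑ a ∈ s, ℙ {ω | X ω = a} := by
  have hset : {ω | X ω ∈ s} = ⋃ a ∈ s, X ⁻¹' {a} := by
    ext ω; simp
  rw [hset, measure_biUnion_finset]
  · rfl
  · intro a _ b _ hab
    exact Set.disjoint_left.mpr (fun ω ha hb => hab (by
      simp only [Set.mem_preimage, Set.mem_singleton_iff] at ha hb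
      rw [← ha, ← hb]))
  · intro a _; exact hm (measurableSet_singleton a)

lemma prob_total_one {Ω α : Type*} [MeasureSpace Ω] [IsProbabilityMeasure (ℙ : Measure Ω)]
    [MeasurableSpace α] [MeasurableSingletonClass α] [Fintype α]
    (X : Ω → α) (hm : Measurable X) :
    ∑ a : α, ℙ {ω | X ω = a} = 1 := by
  have := prob_mem_finset X hm Finset.univ
  simp only [Finset.mem_univ, Set.setOf_true] at this
  rw [← this, measure_univ]

/-- Sign encoding of boolean functions. -/
def sgn {n : ℕ} (b : Fin n → Bool) : Fin n → ℝ := fun i => if b i then 1 else -1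

lemma sgn_inj {n : ℕ} : Function.Injective (sgn (n := n)) := by
  intro b b' h
  funext i
  have := congrFun h i
  by_contra hne
  rcases Bool.eq_false_or_eq_true (b i) with hb | hb <;>
    rcases Bool.eq_false_or_eq_true (b' i) with hb' | hb' <;>
      simp [sgn, hb, hb'] at this hne <;> norm_num at this

lemma sgn_covers {Ω : Type*} {n : ℕ} (S : Ω → Fin n → ℝ)
    (hval : ∀ ω i, S ω i ∈ ({-1, 1} : Set ℝ)) (ω : Ω) : ∃ b, S ω = sgn b := by
  refine ⟨fun i => decide (S ω i = 1), ?_⟩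
  funext i
  have h := hval ω i
  simp only [Set.mem_insert_iff, Set.mem_singleton_iff] at h
  rcases h with h | h <;> simp [sgn, h] <;> norm_num

lemma sgn_total {Ω : Type*} [MeasureSpace Ω] [IsProbabilityMeasure (ℙ : Measure Ω)]
    {n : ℕ} (S : Ω → Fin n → ℝ) (hm : Measurable S)
    (hval : ∀ ω i, S ω i ∈ ({-1, 1} : Set ℝ)) :
    ∑ b : Fin n → Bool, ℙ {ω | S ω = sgn b} = 1 := by
  have hset : (Set.univ : Set Ω) = ⋃ b ∈ (Finset.univ : Finset (Fin n → Bool)), S ⁻¹' {sgn b} := by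
    ext ω
    simp only [Set.mem_univ, true_iff, Set.mem_iUnion, Set.mem_preimage,
      Set.mem_singleton_iff, Finset.mem_univ, exists_true_left]
    exact sgn_covers S hval ω
  have := measure_biUnion_finset (μ := (ℙ : Measure Ω))
    (s := (Finset.univ : Finset (Fin n → Bool))) (f := fun b => S ⁻¹' {sgn b})
    (by
      intro a _ b _ hab
      exact Set.disjoint_left.mpr (fun ω ha hb => hab (sgn_inj (by
        simp only [Set.mem_preimage, Set.mem_singleton_iff] at ha hb
        rw [← ha, ← hb])))
    )
    (fun b _ => hm (measurableSet_singleton _))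
  have h2 : ℙ (Set.univ : Set Ω) = ∑ b : Fin n → Bool, ℙ {ω | S ω = sgn b} := by
    rw [hset]; simpa [Set.preimage] using this
  rw [measure_univ] at h2; exact h2.symm

lemma atom_indep {Ω : Type*} [MeasureSpace Ω] [IsProbabilityMeasure (ℙ : Measure Ω)]
    {n m : ℕ}
    (H1 H2 : Ω → Fin n → Fin (2^m)) (S1 S2 : Ω → Fin n → ℝ)
    (hmH1 : Measurable H1) (hmH2 : Measurable H2)
    (hmS1 : Measurable S1) (hmS2 : Measurable S2)
    (hindep : ∀ (f1 f2 : Fin n → Fin (2^m)) (g1 g2 : Fin n → ℝ),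
      ℙ {ω | H1 ω = f1 ∧ H2 ω = f2 ∧ S1 ω = g1 ∧ S2 ω = g2}
        = ℙ {ω | H1 ω = f1} * ℙ {ω | H2 ω = f2} * ℙ {ω | S1 ω = g1} * ℙ {ω | S2 ω = g2})
    (hS1val : ∀ ω i, S1 ω i ∈ ({-1, 1} : Set ℝ))
    (hS2val : ∀ ω j, S2 ω j ∈ ({-1, 1} : Set ℝ))
    (f1 f2 : Fin n → Fin (2^m)) :
    ℙ {ω | H1 ω = f1 ∧ H2 ω = f2} = ℙ {ω | H1 ω = f1} * ℙ {ω | H2 ω = f2} := by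
  classical
  set A : (Fin n → Bool) × (Fin n → Bool) → Set Ω := fun q =>
    {ω | H1 ω = f1 ∧ H2 ω = f2 ∧ S1 ω = sgn q.1 ∧ S2 ω = sgn q.2} with hA
  have hset : {ω | H1 ω = f1 ∧ H2 ω = f2}
      = ⋃ q ∈ (Finset.univ : Finset ((Fin n → Bool) × (Fin n → Bool))), A q := by
    ext ω
    simp only [Set.mem_setOf_eq, Set.mem_iUnion, Finset.mem_univ, exists_true_left, hA]
    constructor
    · rintro ⟨h1, h2⟩
      obtain ⟨b1, hb1⟩ := sgn_covers S1 hS1val ω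
      obtain ⟨b2, hb2⟩ := sgn_covers S2 hS2val ω
      exact ⟨(b1, b2), h1, h2, hb1, hb2⟩
    · rintro ⟨q, h1, h2, -, -⟩
      exact ⟨h1, h2⟩
  have hmeas : ∀ q : (Fin n → Bool) × (Fin n → Bool), MeasurableSet (A q) := by
    intro q
    have : A q = (H1 ⁻¹' {f1}) ∩ (H2 ⁻¹' {f2}) ∩ (S1 ⁻¹' {sgn q.1}) ∩ (S2 ⁻¹' {sgn q.2}) := by
      ext ω; simp [hA, Set.mem_setOf_eq, and_assoc]
    rw [this]
    exact (((hmH1 (measurableSet_singleton _)).inter (hmH2 (measurableSet_singleton _))).inter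
      (hmS1 (measurableSet_singleton _))).inter (hmS2 (measurableSet_singleton _))
  have hdisj : ((Finset.univ : Finset ((Fin n → Bool) × (Fin n → Bool))) :
      Set _).PairwiseDisjoint A := by
    intro a _ b _ hab
    refine Set.disjoint_left.mpr (fun ω ha hb => hab ?_)
    obtain ⟨-, -, ha1, ha2⟩ := ha
    obtain ⟨-, -, hb1, hb2⟩ := hb
    exact Prod.ext (sgn_inj (ha1 ▸ hb1 ▸ rfl)) (sgn_inj (ha2 ▸ hb2 ▸ rfl))
  rw [hset, measure_biUnion_finset hdisj (fun q _ => hmeas q)]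
  have hq : ∀ q : (Fin n → Bool) × (Fin n → Bool), ℙ (A q)
      = ℙ {ω | H1 ω = f1} * ℙ {ω | H2 ω = f2} * ℙ {ω | S1 ω = sgn q.1}
          * ℙ {ω | S2 ω = sgn q.2} :=
    fun q => hindep f1 f2 (sgn q.1) (sgn q.2)
  calc ∑ q : (Fin n → Bool) × (Fin n → Bool), ℙ (A q)
      = ∑ q : (Fin n → Bool) × (Fin n → Bool),
          ℙ {ω | H1 ω = f1} * ℙ {ω | H2 ω = f2} * ℙ {ω | S1 ω = sgn q.1}
            * ℙ {ω | S2 ω = sgn q.2} :=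
        Finset.sum_congr rfl (fun q _ => hq q)
    _ = ℙ {ω | H1 ω = f1} * ℙ {ω | H2 ω = f2} *
          ((∑ b1 : Fin n → Bool, ℙ {ω | S1 ω = sgn b1})
            * (∑ b2 : Fin n → Bool, ℙ {ω | S2 ω = sgn b2})) := by
        rw [Fintype.sum_prod_type, Finset.sum_mul_sum]
        simp_rw [Finset.mul_sum]
        congr 1; ext b1; congr 1; ext b2; ring
    _ = ℙ {ω | H1 ω = f1} * ℙ {ω | H2 ω = f2} := by
        rw [sgn_total S1 hmS1 hS1val, sgn_total S2 hmS2 hS2val, one_mul, mul_one]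

lemma prob_pair_mem {Ω : Type*} [MeasureSpace Ω] {n m : ℕ}
    (H1 H2 : Ω → Fin n → Fin (2^m))
    (hmH1 : Measurable H1) (hmH2 : Measurable H2)
    (hatom : ∀ f1 f2, ℙ {ω | H1 ω = f1 ∧ H2 ω = f2}
      = ℙ {ω | H1 ω = f1} * ℙ {ω | H2 ω = f2})
    (s : Finset ((Fin n → Fin (2^m)) × (Fin n → Fin (2^m)))) :
    ℙ {ω | (H1 ω, H2 ω) ∈ s} = ∑ q ∈ s, ℙ {ω | H1 ω = q.1} * ℙ {ω | H2 ω = q.2} := by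
  have hset : {ω | (H1 ω, H2 ω) ∈ s} = ⋃ q ∈ s, {ω | H1 ω = q.1 ∧ H2 ω = q.2} := by
    ext ω
    simp only [Set.mem_setOf_eq, Set.mem_iUnion]
    constructor
    · intro h; exact ⟨(H1 ω, H2 ω), h, rfl, rfl⟩
    · rintro ⟨⟨a, b⟩, hq, h1, h2⟩; rw [h1, h2]; exact hq
  rw [hset, measure_biUnion_finset]
  · exact Finset.sum_congr rfl (fun q _ => hatom q.1 q.2)
  · intro a _ b _ hab
    refine Set.disjoint_left.mpr (fun ω ha hb => hab ?_)
    obtain ⟨ha1, ha2⟩ := ha; obtain ⟨hb1, hb2⟩ := hb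
    exact Prod.ext (ha1 ▸ hb1 ▸ rfl) (ha2 ▸ hb2 ▸ rfl)
  · intro q _
    exact (hmH1 (measurableSet_singleton q.1)).inter (hmH2 (measurableSet_singleton q.2))

lemma fiber_sum {Ω : Type*} [MeasureSpace Ω] [IsProbabilityMeasure (ℙ : Measure Ω)]
    {n m : ℕ} (X : Ω → Fin n → Fin (2^m)) (hm : Measurable X)
    (hunif : ∀ i u, ℙ {ω | X ω i = u} = 1 / (2^m : ℝ≥0∞))
    (hpair : ∀ i i', i ≠ i' → ∀ u v,
      ℙ {ω | X ω i = u ∧ X ω i' = v} = ℙ {ω | X ω i = u} * ℙ {ω | X ω i' = v})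
    (i i' : Fin n) (hne : i ≠ i') (g : Fin (2^m) → Fin (2^m)) :
    ∑ f ∈ Finset.univ.filter (fun f : Fin n → Fin (2^m) => f i' = g (f i)),
      ℙ {ω | X ω = f} = 1 / (2^m : ℝ≥0∞) := by
  classical
  have pairsum : ∀ u v : Fin (2^m),
      ∑ f ∈ Finset.univ.filter (fun f : Fin n → Fin (2^m) => f i = u ∧ f i' = v),
        ℙ {ω | X ω = f} = (1 / (2^m : ℝ≥0∞)) * (1 / (2^m : ℝ≥0∞)) := by
    intro u v
    have hset : {ω | X ω ∈ Finset.univ.filter (fun f : Fin n → Fin (2^m) => f i = u ∧ f i' = v)}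
        = {ω | X ω i = u ∧ X ω i' = v} := by
      ext ω; simp [Finset.mem_filter]
    rw [← prob_mem_finset X hm, hset, hpair i i' hne u v, hunif i u, hunif i' v]
  have hfib := Finset.sum_fiberwise_eq_sum_filter
    (Finset.univ.filter (fun f : Fin n → Fin (2^m) => f i' = g (f i)))
    (Finset.univ : Finset (Fin (2^m)))
    (fun f => f i) (fun f => ℙ {ω | X ω = f})
  simp only [Finset.mem_univ, Finset.filter_true] at hfib
  rw [← hfib]
  have hfilter : ∀ u : Fin (2^m),
      (Finset.univ.filter (fun f : Fin n → Fin (2^m) => f i' = g (f i))).filter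
        (fun f => f i = u)
      = Finset.univ.filter (fun f : Fin n → Fin (2^m) => f i = u ∧ f i' = g u) := by
    intro u
    ext f
    simp only [Finset.mem_filter, Finset.mem_univ, true_and]
    constructor
    · rintro ⟨hc, hu⟩; rw [hu] at hc; exact ⟨hu, hc⟩
    · rintro ⟨hu, hc⟩; subst hu; exact ⟨hc, rfl⟩
  calc ∑ u : Fin (2^m), ∑ f ∈ (Finset.univ.filter
          (fun f : Fin n → Fin (2^m) => f i' = g (f i))).filter (fun f => f i = u),
        ℙ {ω | X ω = f}
      = ∑ u : Fin (2^m), (1 / (2^m : ℝ≥0∞)) * (1 / (2^m : ℝ≥0∞)) := by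
        refine Finset.sum_congr rfl (fun u _ => ?_)
        rw [hfilter u, pairsum u (g u)]
    _ = 1 / (2^m : ℝ≥0∞) := by
        rw [Finset.sum_const, Finset.card_univ, Fintype.card_fin]
        have h0 : (2^m : ℝ≥0∞) ≠ 0 := pow_ne_zero _ two_ne_zero
        have ht : (2^m : ℝ≥0∞) ≠ ⊤ := ENNReal.pow_ne_top (by norm_num)
        rw [nsmul_eq_mul, Nat.cast_pow, Nat.cast_ofNat]
        simp only [one_div]
        rw [← mul_assoc, ENNReal.mul_inv_cancel h0 ht, one_mul]

lemma collision_bound {n m : ℕ} (P1 P2 : (Fin n → Fin (2^m)) → ℝ≥0∞)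
    (h1tot : ∑ f : Fin n → Fin (2^m), P1 f ≤ 1)
    (h2tot : ∑ f : Fin n → Fin (2^m), P2 f ≤ 1)
    (h1fib : ∀ (a b : Fin n), a ≠ b → ∀ g : Fin (2^m) → Fin (2^m),
      ∑ f ∈ Finset.univ.filter (fun f : Fin n → Fin (2^m) => f b = g (f a)), P1 f
        = 1 / (2^m : ℝ≥0∞))
    (h2fib : ∀ (a b : Fin n), a ≠ b → ∀ g : Fin (2^m) → Fin (2^m),
      ∑ f ∈ Finset.univ.filter (fun f : Fin n → Fin (2^m) => f b = g (f a)), P2 f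
        = 1 / (2^m : ℝ≥0∞))
    (i j i' j' : Fin n) (hne : (i', j') ≠ (i, j)) :
    ∑ q ∈ Finset.univ.filter
        (fun q : (Fin n → Fin (2^m)) × (Fin n → Fin (2^m)) =>
          fxor (q.1 i') (q.2 j') = fxor (q.1 i) (q.2 j)),
      P1 q.1 * P2 q.2 ≤ 1 / (2^m : ℝ≥0∞) := by
  classical
  rw [Finset.sum_filter]
  by_cases hii : i' = i
  · subst hii
    have hjj : j ≠ j' := by
      intro h; exact hne (by rw [h])
    calc ∑ q : (Fin n → Fin (2^m)) × (Fin n → Fin (2^m)),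
          (if fxor (q.1 i') (q.2 j') = fxor (q.1 i') (q.2 j) then P1 q.1 * P2 q.2 else 0)
        = ∑ f1 : Fin n → Fin (2^m), ∑ f2 : Fin n → Fin (2^m),
            (if f2 j' = id (f2 j) then P1 f1 * P2 f2 else 0) := by
          rw [Fintype.sum_prod_type]
          refine Finset.sum_congr rfl (fun f1 _ => Finset.sum_congr rfl (fun f2 _ => ?_))
          refine if_congr ⟨fun h => fxor_left_cancel h, fun h => ?_⟩ rfl rfl
          simp only [id] at h
          exact congrArg (fun z => fxor (f1 i') z) h
      _ = ∑ f1 : Fin n → Fin (2^m), P1 f1 * (1 / (2^m : ℝ≥0∞)) := by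
          refine Finset.sum_congr rfl (fun f1 _ => ?_)
          calc ∑ f2 : Fin n → Fin (2^m), (if f2 j' = id (f2 j) then P1 f1 * P2 f2 else 0)
              = ∑ f2 ∈ Finset.univ.filter (fun f2 : Fin n → Fin (2^m) => f2 j' = id (f2 j)),
                  P1 f1 * P2 f2 := (Finset.sum_filter _ _).symm
            _ = P1 f1 * ∑ f2 ∈ Finset.univ.filter
                  (fun f2 : Fin n → Fin (2^m) => f2 j' = id (f2 j)), P2 f2 := by
                rw [Finset.mul_sum]
            _ = P1 f1 * (1 / (2^m : ℝ≥0∞)) := by rw [h2fib j j' hjj id]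
      _ = (∑ f1 : Fin n → Fin (2^m), P1 f1) * (1 / (2^m : ℝ≥0∞)) := by
          rw [Finset.sum_mul]
      _ ≤ 1 * (1 / (2^m : ℝ≥0∞)) := mul_le_mul_left h1tot _
      _ = 1 / (2^m : ℝ≥0∞) := one_mul _
  · have hii' : i ≠ i' := fun h => hii h.symm
    calc ∑ q : (Fin n → Fin (2^m)) × (Fin n → Fin (2^m)),
          (if fxor (q.1 i') (q.2 j') = fxor (q.1 i) (q.2 j) then P1 q.1 * P2 q.2 else 0)
        = ∑ f2 : Fin n → Fin (2^m), ∑ f1 : Fin n → Fin (2^m),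
            (if f1 i' = (fun u => fxor (fxor u (f2 j)) (f2 j')) (f1 i)
              then P1 f1 * P2 f2 else 0) := by
          rw [Fintype.sum_prod_type_right]
          refine Finset.sum_congr rfl (fun f2 _ => Finset.sum_congr rfl (fun f1 _ => ?_))
          exact if_congr fxor_eq_iff rfl rfl
      _ = ∑ f2 : Fin n → Fin (2^m), (1 / (2^m : ℝ≥0∞)) * P2 f2 := by
          refine Finset.sum_congr rfl (fun f2 _ => ?_)
          calc ∑ f1 : Fin n → Fin (2^m),
                (if f1 i' = (fun u => fxor (fxor u (f2 j)) (f2 j')) (f1 i)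
                  then P1 f1 * P2 f2 else 0)
              = ∑ f1 ∈ Finset.univ.filter (fun f1 : Fin n → Fin (2^m) =>
                  f1 i' = (fun u => fxor (fxor u (f2 j)) (f2 j')) (f1 i)), P1 f1 * P2 f2 :=
                (Finset.sum_filter _ _).symm
            _ = (∑ f1 ∈ Finset.univ.filter (fun f1 : Fin n → Fin (2^m) =>
                  f1 i' = (fun u => fxor (fxor u (f2 j)) (f2 j')) (f1 i)), P1 f1) * P2 f2 := by
                rw [Finset.sum_mul]
            _ = (1 / (2^m : ℝ≥0∞)) * P2 f2 := by
                rw [h1fib i i' hii' (fun u => fxor (fxor u (f2 j)) (f2 j'))]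
      _ = (1 / (2^m : ℝ≥0∞)) * ∑ f2 : Fin n → Fin (2^m), P2 f2 := by
          rw [Finset.mul_sum]
      _ ≤ (1 / (2^m : ℝ≥0∞)) * 1 := mul_le_mul_right h2tot _
      _ = 1 / (2^m : ℝ≥0∞) := mul_one _

end Aux

/-- For the FWHT-based compressed matrix multiplication estimator, the probability
that the estimate of entry `(i,j)` of `C = A * B` differs from the true value is at
most `nnz(C) / b` with `b = 2^m`, where `nnz(C)` is the number of nonzero entries of
`C`; in particular, when the product is sparse the estimate is exact with high
probability for `b` sufficiently large. -/
theorem compressed_mm_fwht_exact_whp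
    {Ω : Type*} [MeasureSpace Ω] [IsProbabilityMeasure (ℙ : Measure Ω)]
    (n m : ℕ) (hn : 0 < n)
    (A B C : Matrix (Fin n) (Fin n) ℝ) (hC : C = A * B)
    (H1 H2 : Ω → Fin n → Fin (2^m)) (S1 S2 : Ω → Fin n → ℝ)
    (hmH1 : Measurable H1) (hmH2 : Measurable H2)
    (hmS1 : Measurable S1) (hmS2 : Measurable S2)
    -- the four random functions are mutually independent:
    (hindep : ∀ (f1 f2 : Fin n → Fin (2^m)) (g1 g2 : Fin n → ℝ),
      ℙ {ω | H1 ω = f1 ∧ H2 ω = f2 ∧ S1 ω = g1 ∧ S2 ω = g2}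
        = ℙ {ω | H1 ω = f1} * ℙ {ω | H2 ω = f2} * ℙ {ω | S1 ω = g1} * ℙ {ω | S2 ω = g2})
    -- H1 and H2 are pairwise independent uniform families into Fin (2^m):
    (hH1unif : ∀ i u, ℙ {ω | H1 ω i = u} = 1 / (2^m : ℝ≥0∞))
    (hH1pair : ∀ i i', i ≠ i' → ∀ u v,
      ℙ {ω | H1 ω i = u ∧ H1 ω i' = v} = ℙ {ω | H1 ω i = u} * ℙ {ω | H1 ω i' = v})
    (hH2unif : ∀ j u, ℙ {ω | H2 ω j = u} = 1 / (2^m : ℝ≥0∞))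
    (hH2pair : ∀ j j', j ≠ j' → ∀ u v,
      ℙ {ω | H2 ω j = u ∧ H2 ω j' = v} = ℙ {ω | H2 ω j = u} * ℙ {ω | H2 ω j' = v})
    -- S1 and S2 are pairwise independent uniform families of random signs:
    (hS1val : ∀ ω i, S1 ω i ∈ ({-1, 1} : Set ℝ))
    (hS2val : ∀ ω j, S2 ω j ∈ ({-1, 1} : Set ℝ))
    (hS1unif : ∀ i, ∀ u ∈ ({-1, 1} : Set ℝ), ℙ {ω | S1 ω i = u} = 1 / 2)
    (hS1pair : ∀ i i', i ≠ i' → ∀ u v : ℝ,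
      ℙ {ω | S1 ω i = u ∧ S1 ω i' = v} = ℙ {ω | S1 ω i = u} * ℙ {ω | S1 ω i' = v})
    (hS2unif : ∀ j, ∀ u ∈ ({-1, 1} : Set ℝ), ℙ {ω | S2 ω j = u} = 1 / 2)
    (hS2pair : ∀ j j', j ≠ j' → ∀ u v : ℝ,
      ℙ {ω | S2 ω j = u ∧ S2 ω j' = v} = ℙ {ω | S2 ω j = u} * ℙ {ω | S2 ω j' = v})
    (i j : Fin n) :
    ℙ {ω | estimate C (H1 ω) (H2 ω) (S1 ω) (S2 ω) i j ≠ C i j}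
      ≤ ((Finset.univ.filter (fun p : Fin n × Fin n => C p.1 p.2 ≠ 0)).card : ℝ≥0∞)
          / (2^m : ℝ≥0∞) := by
  classical
  set T : Finset (Fin n × Fin n) :=
    Finset.univ.filter (fun p : Fin n × Fin n => p ≠ (i, j) ∧ C p.1 p.2 ≠ 0) with hT
  set Sp : Fin n × Fin n → Finset ((Fin n → Fin (2^m)) × (Fin n → Fin (2^m))) := fun p =>
    Finset.univ.filter (fun q : (Fin n → Fin (2^m)) × (Fin n → Fin (2^m)) =>
      fxor (q.1 p.1) (q.2 p.2) = fxor (q.1 i) (q.2 j)) with hSp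
  have hsub : {ω | estimate C (H1 ω) (H2 ω) (S1 ω) (S2 ω) i j ≠ C i j}
      ⊆ ⋃ p ∈ T, {ω | (H1 ω, H2 ω) ∈ Sp p} := by
    intro ω hω
    by_contra hmem
    simp only [Set.mem_iUnion, Set.mem_setOf_eq, not_exists] at hmem
    apply hω
    refine estimate_eq_of_no_collision C (H1 ω) (H2 ω) (S1 ω) (S2 ω) i j ?_ ?_ ?_
    · have := hS1val ω i
      simpa [Set.mem_insert_iff] using this
    · have := hS2val ω j
      simpa [Set.mem_insert_iff] using this
    · intro p hpne hpC hcol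
      have hpT : p ∈ T := by
        rw [hT]; simp only [Finset.mem_filter, Finset.mem_univ, true_and]
        exact ⟨hpne, hpC⟩
      have hpS : (H1 ω, H2 ω) ∈ Sp p := by
        rw [hSp]; simp only [Finset.mem_filter, Finset.mem_univ, true_and]
        exact hcol
      exact hmem p hpT hpS
  have hatom := atom_indep H1 H2 S1 S2 hmH1 hmH2 hmS1 hmS2 hindep hS1val hS2val
  have h1tot : ∑ f : Fin n → Fin (2^m), ℙ {ω | H1 ω = f} ≤ 1 :=
    le_of_eq (prob_total_one H1 hmH1)
  have h2tot : ∑ f : Fin n → Fin (2^m), ℙ {ω | H2 ω = f} ≤ 1 :=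
    le_of_eq (prob_total_one H2 hmH2)
  have hperpair : ∀ p ∈ T, ℙ {ω | (H1 ω, H2 ω) ∈ Sp p} ≤ 1 / (2^m : ℝ≥0∞) := by
    intro p hp
    rw [hT] at hp
    simp only [Finset.mem_filter, Finset.mem_univ, true_and] at hp
    rw [prob_pair_mem H1 H2 hmH1 hmH2 hatom (Sp p)]
    exact collision_bound (fun f => ℙ {ω | H1 ω = f}) (fun f => ℙ {ω | H2 ω = f})
      h1tot h2tot
      (fun a b hab g => fiber_sum H1 hmH1 hH1unif hH1pair a b hab g)
      (fun a b hab g => fiber_sum H2 hmH2 hH2unif hH2pair a b hab g)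
      i j p.1 p.2 (by simpa using hp.1)
  have hcard : (T.card : ℝ≥0∞)
      ≤ ((Finset.univ.filter (fun p : Fin n × Fin n => C p.1 p.2 ≠ 0)).card : ℝ≥0∞) := by
    have : T ⊆ Finset.univ.filter (fun p : Fin n × Fin n => C p.1 p.2 ≠ 0) := by
      intro p hp
      rw [hT] at hp
      simp only [Finset.mem_filter, Finset.mem_univ, true_and] at hp ⊢
      exact hp.2
    exact Nat.cast_le.mpr (Finset.card_le_card this)
  calc ℙ {ω | estimate C (H1 ω) (H2 ω) (S1 ω) (S2 ω) i j ≠ C i j}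
      ≤ ℙ (⋃ p ∈ T, {ω | (H1 ω, H2 ω) ∈ Sp p}) := measure_mono hsub
    _ ≤ ∑ p ∈ T, ℙ {ω | (H1 ω, H2 ω) ∈ Sp p} := measure_biUnion_finset_le T _
    _ ≤ ∑ _p ∈ T, 1 / (2^m : ℝ≥0∞) := Finset.sum_le_sum hperpair
    _ = (T.card : ℝ≥0∞) * (1 / (2^m : ℝ≥0∞)) := by
        rw [Finset.sum_const, nsmul_eq_mul]
    _ ≤ ((Finset.univ.filter (fun p : Fin n × Fin n => C p.1 p.2 ≠ 0)).card : ℝ≥0∞)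
          * (1 / (2^m : ℝ≥0∞)) := mul_le_mul_left hcard _
    _ = ((Finset.univ.filter (fun p : Fin n × Fin n => C p.1 p.2 ≠ 0)).card : ℝ≥0∞)
          / (2^m : ℝ≥0∞) := by
        rw [mul_one_div]
end

section
/- Let d be an odd positive natural number, c and t real numbers with t > 0, and let X_1, …, X_d : Ω → ℝ be independent identically distributed random variables such that Pr[|X_k − c| ≥ t] ≤ 1/4 for each k. Then the median of X_1, …, X_d satisfies Pr[|median(X_1,…,X_d) − c| ≥ t] ≤ exp(−d/8). (This justifies boosting the per-sketch guarantee of compressed matrix multiplication by taking the median of d independent sketch estimates.) -/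
open MeasureTheory
open scoped ENNReal ProbabilityTheory


lemma sorted_count_upper {L : List ℝ} (hL : L.Pairwise (· ≤ ·)) {i : ℕ} (hi : i < L.length)
    (pb : ℝ → Bool) (hp : ∀ x, L.get ⟨i, hi⟩ ≤ x → pb x = true) :
    L.length - i ≤ L.countP pb := by
  have h1 : L.countP pb = (L.take i).countP pb + (L.drop i).countP pb := by
    rw [← List.countP_append, List.take_append_drop]
  have h2 : (L.drop i).countP pb = (L.drop i).length := by
    rw [List.countP_eq_length]
    intro a ha
    obtain ⟨j, hj, rfl⟩ := List.mem_iff_getElem.mp ha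
    rw [List.getElem_drop]
    apply hp
    have : L.get ⟨i, hi⟩ = L[i] := rfl
    rw [this]
    rcases Nat.eq_zero_or_pos j with rfl | hj0
    · simp
    · exact (List.pairwise_iff_getElem.mp hL i (i + j) hi
        (by simp [List.length_drop] at hj; omega) (by omega))
  have h4 : (L.drop i).length = L.length - i := List.length_drop
  omega

lemma sorted_count_lower {L : List ℝ} (hL : L.Pairwise (· ≤ ·)) {i : ℕ} (hi : i < L.length)
    (pb : ℝ → Bool) (hp : ∀ x, x ≤ L.get ⟨i, hi⟩ → pb x = true) :
    i + 1 ≤ L.countP pb := by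
  have h1 : L.countP pb = (L.take (i+1)).countP pb + (L.drop (i+1)).countP pb := by
    rw [← List.countP_append, List.take_append_drop]
  have h2 : (L.take (i+1)).countP pb = (L.take (i+1)).length := by
    rw [List.countP_eq_length]
    intro a ha
    obtain ⟨j, hj, rfl⟩ := List.mem_iff_getElem.mp ha
    rw [List.getElem_take]
    apply hp
    have hjl : j < L.length := by simp [List.length_take] at hj; omega
    have : L.get ⟨i, hi⟩ = L[i] := rfl
    rw [this]
    have hji : j ≤ i := by
      have := hj; simp [List.length_take] at this; omega
    rcases Nat.eq_or_lt_of_le hji with rfl | hlt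
    · exact le_refl _
    · exact (List.pairwise_iff_getElem.mp hL j i hjl hi hlt)
  have h3 : (L.take (i+1)).length = i + 1 := by simp [List.length_take]; omega
  omega

lemma countP_le_sum (p : ℝ → Prop) [DecidablePred p] (l : List ℝ) :
    ((l.countP (fun x => decide (p x)) : ℕ) : ℝ)
      ≤ (l.map (fun x => if p x then (1:ℝ) else 0)).sum := by
  induction l with
  | nil => simp
  | cons a l ih =>
    rw [List.countP_cons, List.map_cons, List.sum_cons]
    by_cases h : p a <;> simp [h] <;> linarith


/-- The median of an odd number `d` of real values: the value of rank `(d+1)/2`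
(i.e. zero-based index `(d-1)/2`) when the values are sorted in nondecreasing
order. -/
noncomputable def medianOdd {d : ℕ} (hd : 0 < d) (v : Fin d → ℝ) : ℝ :=
  (List.insertionSort (· ≤ ·) (List.ofFn v)).get
    ⟨(d - 1) / 2, by rw [List.length_insertionSort, List.length_ofFn]; omega⟩

lemma median_count {d : ℕ} (hdpos : 0 < d) (hd : Odd d) {c t : ℝ} (ht : 0 < t)
    (v : Fin d → ℝ) (h : t ≤ |medianOdd hdpos v - c|) :
    (d + 1) / 2 ≤ (List.ofFn v).countP (fun x => decide (t ≤ |x - c|)) := by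
  obtain ⟨e, he⟩ := hd
  set L := List.insertionSort (· ≤ ·) (List.ofFn v) with hLdef
  have hLlen : L.length = d := by rw [List.length_insertionSort, List.length_ofFn]
  have hLsorted : L.Pairwise (· ≤ ·) := List.pairwise_insertionSort _ _
  have hperm : (List.ofFn v).countP (fun x => decide (t ≤ |x - c|))
      = L.countP (fun x => decide (t ≤ |x - c|)) :=
    ((List.perm_insertionSort _ _).countP_eq _).symm
  rw [hperm]
  have hi : (d - 1) / 2 < L.length := by rw [hLlen]; omega
  have hmed : medianOdd hdpos v = L.get ⟨(d - 1) / 2, hi⟩ := rfl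
  rcases le_abs.mp h with hcase | hcase
  · -- t ≤ median - c
    have := sorted_count_upper hLsorted hi (fun x => decide (t ≤ |x - c|))
      (fun x hx => by
        rw [decide_eq_true_eq]
        have : t ≤ x - c := le_trans hcase (by rw [hmed] at *; linarith)
        exact le_trans this (le_abs_self _))
    omega
  · -- t ≤ -(median - c)
    have := sorted_count_lower hLsorted hi (fun x => decide (t ≤ |x - c|))
      (fun x hx => by
        rw [decide_eq_true_eq]
        have : t ≤ -(x - c) := by rw [hmed] at hcase; linarith
        exact le_trans this (neg_le_abs _))
    omega

open ProbabilityTheory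

/-- Median boosting: if `X_1, …, X_d` (`d` odd) are i.i.d. real random variables
with `Pr[|X_k − c| ≥ t] ≤ 1/4` for each `k`, then the median of `X_1, …, X_d`
satisfies `Pr[|median − c| ≥ t] ≤ exp(−d/8)`. -/
theorem median_boosting
    {Ω : Type*} [MeasureSpace Ω] [IsProbabilityMeasure (ℙ : Measure Ω)]
    (d : ℕ) (hd : Odd d) (hdpos : 0 < d) (c t : ℝ) (ht : 0 < t)
    (X : Fin d → Ω → ℝ) (hmeas : ∀ k, Measurable (X k))
    -- the X_k are (mutually) independent:
    (hindep : ProbabilityTheory.iIndepFun X ℙ)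
    -- the X_k are identically distributed:
    (hident : ∀ k k' : Fin d, ProbabilityTheory.IdentDistrib (X k) (X k') ℙ ℙ)
    -- each estimate deviates from c by at least t with probability at most 1/4:
    (hdev : ∀ k, ℙ {ω | t ≤ |X k ω - c|} ≤ 1 / 4) :
    ℙ {ω | t ≤ |medianOdd hdpos (fun k => X k ω) - c|}
      ≤ ENNReal.ofReal (Real.exp (-(d : ℝ) / 8)) := by
  classical
  set s : ℝ := Real.log 3 with hs
  have hs0 : 0 ≤ s := Real.log_nonneg (by norm_num)
  have hexps : Real.exp s = 3 := Real.exp_log (by norm_num)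
  set g : ℝ → ℝ := fun x => if t ≤ |x - c| then 1 else 0 with hg
  have hgmeas : Measurable g := by
    apply Measurable.ite _ measurable_const measurable_const
    exact measurableSet_le measurable_const ((measurable_id.sub_const c).abs)
  set Y : Fin d → Ω → ℝ := fun k => g ∘ X k with hY
  have hYmeas : ∀ k, Measurable (Y k) := fun k => hgmeas.comp (hmeas k)
  have hYindep : iIndepFun Y ℙ :=
    hindep.comp (fun _ => g) (fun _ => hgmeas)
  have hY01 : ∀ k ω, Y k ω = 0 ∨ Y k ω = 1 := by
    intro k ω
    simp only [hY, hg, Function.comp_apply]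
    split <;> simp
  set m : ℕ := (d + 1) / 2 with hm
  have hSeq : (∑ k, Y k) = (fun ω => ∑ k, Y k ω) := funext fun ω => Finset.sum_apply _ _ _
  -- Event inclusion
  have hsub : {ω | t ≤ |medianOdd hdpos (fun k => X k ω) - c|}
      ⊆ {ω | (m : ℝ) ≤ ∑ k, Y k ω} := by
    intro ω hω
    simp only [Set.mem_setOf_eq]
    have hc := median_count hdpos hd ht (fun k => X k ω) hω
    have hsum : ∑ k, Y k ω = ∑ k : Fin d, (if t ≤ |X k ω - c| then (1:ℝ) else 0) := by
      refine Finset.sum_congr rfl fun k _ => ?_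
      simp [hY, hg]
    rw [hsum]
    calc (m : ℝ) ≤ (((List.ofFn fun k => X k ω).countP
          (fun x => decide (t ≤ |x - c|)) : ℕ) : ℝ) := by exact_mod_cast hc
      _ ≤ ((List.ofFn fun k => X k ω).map (fun x => if t ≤ |x - c| then (1:ℝ) else 0)).sum :=
          countP_le_sum _ _
      _ = ∑ k : Fin d, (if t ≤ |X k ω - c| then (1:ℝ) else 0) := by
          rw [List.map_ofFn, List.sum_ofFn]; rfl
  -- integrability
  have hint : ∀ k, Integrable (fun ω => Real.exp (s * Y k ω)) ℙ := by
    intro k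
    refine Integrable.mono' (integrable_const (Real.exp s))
      (((hYmeas k).const_mul s).exp.aestronglyMeasurable) ?_
    filter_upwards with ω
    rw [Real.norm_eq_abs, abs_of_pos (Real.exp_pos _), Real.exp_le_exp]
    rcases hY01 k ω with h | h <;> rw [h] <;> simp [hs0]
  have hintS : Integrable (fun ω => Real.exp (s * ∑ k, Y k ω)) ℙ := by
    refine Integrable.mono' (integrable_const (Real.exp (s * d)))
      (((Finset.measurable_sum Finset.univ fun k _ => hYmeas k).const_mul s).exp.aestronglyMeasurable) ?_
    filter_upwards with ω
    rw [Real.norm_eq_abs, abs_of_pos (Real.exp_pos _), Real.exp_le_exp]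
    have : ∑ k, Y k ω ≤ d := by
      calc ∑ k, Y k ω ≤ ∑ _k : Fin d, (1:ℝ) :=
            Finset.sum_le_sum (fun k _ => by rcases hY01 k ω with h | h <;> simp [h])
        _ = d := by simp
    nlinarith [this, hs0]
  -- mgf bound
  have hmgf : ∀ k, mgf (Y k) ℙ s ≤ 3 / 2 := by
    intro k
    have hA : MeasurableSet {ω | t ≤ |X k ω - c|} :=
      measurableSet_le measurable_const ((hmeas k).sub_const c).abs
    have heq : (fun ω => Real.exp (s * Y k ω))
        = fun ω => {ω | t ≤ |X k ω - c|}.indicator (fun _ => Real.exp s - 1) ω + 1 := by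
      funext ω
      by_cases h : t ≤ |X k ω - c|
      · simp [hY, hg, Set.indicator, h, mul_one]
      · simp [hY, hg, Set.indicator, h]
    have hp : (ℙ {ω | t ≤ |X k ω - c|}).toReal ≤ 1 / 4 := by
      have h1 := ENNReal.toReal_mono (by norm_num) (hdev k)
      simpa using h1
    have hp0 : (0:ℝ) ≤ (ℙ {ω | t ≤ |X k ω - c|}).toReal := ENNReal.toReal_nonneg
    rw [mgf, heq, integral_add ((integrable_const _).indicator hA) (integrable_const 1),
      integral_indicator_const _ hA, integral_const, probReal_univ]
    simp only [smul_eq_mul, ENNReal.toReal_one, one_smul, measureReal_def]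
    rw [hexps]
    linarith
  -- Chernoff
  have hch := measure_ge_le_exp_mul_mgf (μ := ℙ) (X := fun ω => ∑ k, Y k ω) (ε := (m:ℝ)) hs0 hintS
  rw [← hSeq, hYindep.mgf_sum hYmeas Finset.univ] at hch
  have hprod : ∏ k, mgf (Y k) ℙ s ≤ (3/2 : ℝ) ^ d := by
    calc ∏ k, mgf (Y k) ℙ s ≤ ∏ _k : Fin d, (3/2 : ℝ) :=
          Finset.prod_le_prod (fun k _ => mgf_nonneg) (fun k _ => hmgf k)
      _ = (3/2 : ℝ) ^ d := by simp [div_pow]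
  -- numeric bound
  have key : Real.log 3 + 1/4 ≤ 2 * Real.log 2 := by
    have e4 : Real.exp (1/4 : ℝ) ≤ 4/3 := by
      have h1 : (Real.exp (1/4 : ℝ)) ^ (4:ℕ) = Real.exp 1 := by
        rw [← Real.exp_nat_mul]; norm_num
      refine le_of_pow_le_pow_left₀ (n := 4) (by norm_num) (by norm_num) ?_
      rw [h1]
      nlinarith [Real.exp_one_lt_d9]
    have h2 : (1/4 : ℝ) ≤ Real.log (4/3) :=
      (Real.le_log_iff_exp_le (by norm_num)).mpr e4
    have h3 : Real.log (4/3 : ℝ) = Real.log 4 - Real.log 3 :=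
      Real.log_div (by norm_num) (by norm_num)
    have h4 : Real.log (4:ℝ) = 2 * Real.log 2 := by
      rw [show (4:ℝ) = 2^(2:ℕ) by norm_num, Real.log_pow]; push_cast; ring
    linarith
  have hmr : (m : ℝ) = ((d : ℝ) + 1) / 2 := by
    obtain ⟨e, he⟩ := hd
    have : m = e + 1 := by omega
    rw [this, he]; push_cast; ring
  have hnum : Real.exp (-s * m) * (3/2 : ℝ) ^ d ≤ Real.exp (-(d:ℝ) / 8) := by
    rw [show ((3:ℝ)/2) ^ d = Real.exp (d * Real.log (3/2)) by
      rw [Real.exp_nat_mul, Real.exp_log (by norm_num)]]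
    rw [← Real.exp_add, Real.exp_le_exp, hmr]
    have h2 : Real.log (3/2 : ℝ) = Real.log 3 - Real.log 2 :=
      Real.log_div (by norm_num) (by norm_num)
    have hd0 : (0:ℝ) ≤ d := Nat.cast_nonneg d
    have hkd : (d:ℝ) * (Real.log 3 + 1/4) ≤ (d:ℝ) * (2 * Real.log 2) :=
      mul_le_mul_of_nonneg_left key hd0
    have l3 : 0 ≤ Real.log 3 := Real.log_nonneg (by norm_num)
    rw [hs, h2]
    nlinarith [hkd, l3]
  -- assemble
  calc ℙ {ω | t ≤ |medianOdd hdpos (fun k => X k ω) - c|}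
      ≤ ℙ {ω | (m : ℝ) ≤ ∑ k, Y k ω} := measure_mono hsub
    _ = ENNReal.ofReal ((ℙ {ω | (m : ℝ) ≤ ∑ k, Y k ω}).toReal) :=
        (ENNReal.ofReal_toReal (measure_ne_top _ _)).symm
    _ ≤ ENNReal.ofReal (Real.exp (-(d:ℝ) / 8)) := by
        apply ENNReal.ofReal_le_ofReal
        refine hch.trans ?_
        calc Real.exp (-s * m) * ∏ k, mgf (Y k) ℙ s
            ≤ Real.exp (-s * m) * (3/2 : ℝ) ^ d := by
              apply mul_le_mul_of_nonneg_left hprod (Real.exp_pos _).le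
          _ ≤ Real.exp (-(d:ℝ) / 8) := hnum
end

section
/- Let w be a positive natural number and ℓ a natural number with ℓ ≤ w. Let a, c be independent random variables, each uniformly distributed on Fin (2^(2w)). For x ∈ Fin (2^w), define h_{a,c}(x) ∈ Fin (2^ℓ) to be the top ℓ bits of (a·x + c) mod 2^(2w), i.e. h_{a,c}(x) = ((a·x + c) mod 2^(2w)) / 2^(2w−ℓ) (integer division). Then the multiply-add-shift family {h_{a,c}} is 2-wise independent: for every x ∈ Fin (2^w) and u ∈ Fin (2^ℓ), Pr[h_{a,c}(x) = u] = 2^(−ℓ), and for every x ≠ y in Fin (2^w) and every u, v ∈ Fin (2^ℓ), Pr[h_{a,c}(x) = u and h_{a,c}(y) = v] = 2^(−2ℓ). -/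
open MeasureTheory
open scoped ENNReal ProbabilityTheory

section helpers
open Finset


lemma div_eq_iff' (D u m : ℕ) (hD : 0 < D) : m / D = u ↔ u * D ≤ m ∧ m < u * D + D := by
  constructor
  · rintro rfl
    refine ⟨Nat.div_mul_le_self m D, ?_⟩
    have h1 := Nat.div_add_mod m D
    have h2 := Nat.mod_lt m hD
    have h3 : m / D * D = D * (m / D) := Nat.mul_comm _ _
    omega
  · rintro ⟨h1, h2⟩
    exact Nat.div_eq_of_lt_le h1 (by rw [show (u + 1) * D = u * D + D from by ring]; omega)

lemma countDiv (D L u : ℕ) (hD : 0 < D) (hu : u < L) :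
    ((range (D * L)).filter (fun m => m / D = u)).card = D := by
  have h : (range (D * L)).filter (fun m => m / D = u) = Ico (u * D) (u * D + D) := by
    ext m
    simp only [mem_filter, mem_range, mem_Ico, div_eq_iff' D u m hD]
    have hb : (u + 1) * D ≤ L * D := Nat.mul_le_mul_right D hu
    have e1 : (u + 1) * D = u * D + D := by ring
    have e2 : D * L = L * D := by ring
    omega
  rw [h, Nat.card_Ico]
  omega

lemma shift_inj (K : ℕ) (hK : 0 < K) (q j1 j2 : ℕ) (h1 : j1 < K) (h2 : j2 < K)
    (he : (q + j1) % K = (q + j2) % K) : j1 = j2 := by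
  have : j1 % K = j2 % K := Nat.ModEq.add_left_cancel' q he
  rwa [Nat.mod_eq_of_lt h1, Nat.mod_eq_of_lt h2] at this

lemma keyinv (K q m : ℕ) (hK : 0 < K) (hm : m < K) :
    (q + (m + (K - q % K)) % K) % K = m := by
  have ht : q % K < K := Nat.mod_lt _ hK
  have htq : q % K ≤ q := Nat.mod_le _ _
  have hd := Nat.div_add_mod q K
  rw [Nat.add_mod_mod]
  have e1 : q + (m + (K - q % K)) = m + K * (q / K) + K := by omega
  rw [e1, Nat.add_mod_right, Nat.add_mul_mod_self_left, Nat.mod_eq_of_lt hm]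

lemma shiftCount (K q : ℕ) (hK : 0 < K) (Q : ℕ → Prop) [DecidablePred Q] :
    ((range K).filter (fun j => Q ((q + j) % K))).card = ((range K).filter Q).card := by
  apply le_antisymm
  · apply Finset.card_le_card_of_injOn (fun j => (q + j) % K)
    · intro j hj
      simp only [Finset.mem_coe, mem_filter, mem_range] at *
      exact ⟨Nat.mod_lt _ hK, hj.2⟩
    · intro j1 h1 j2 h2 he
      simp only [Finset.coe_filter, Set.mem_setOf_eq, mem_range] at h1 h2
      exact shift_inj K hK q j1 j2 h1.1 h2.1 he
  · apply Finset.card_le_card_of_injOn (fun m => (m + (K - q % K)) % K)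
    · intro m hm
      simp only [Finset.mem_coe, mem_filter, mem_range] at *
      refine ⟨Nat.mod_lt _ hK, ?_⟩
      rw [keyinv K q m hK hm.1]
      exact hm.2
    · intro m1 h1 m2 h2 he
      simp only [Finset.coe_filter, Set.mem_setOf_eq, mem_range] at h1 h2
      have := congrArg (fun z => (q + z) % K) he
      simp only at this
      rwa [keyinv K q m1 hK h1.1, keyinv K q m2 hK h2.1] at this

lemma mod_decomp (t g M K : ℕ) (ht : t < g) (hK : 0 < K) :
    (t + g * M) % (g * K) = t + g * (M % K) := by
  conv_lhs => rw [show t + g * M = (t + g * (M % K)) + (g * K) * (M / K) by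
    have := Nat.div_add_mod M K
    have e : g * M = g * (K * (M / K) + M % K) := by rw [this]
    have e2 : g * (K * (M / K) + M % K) = g * (M % K) + (g * K) * (M / K) := by ring
    omega]
  rw [Nat.add_mul_mod_self_left]
  apply Nat.mod_eq_of_lt
  have h1 : M % K < K := Nat.mod_lt M hK
  have h2 : g * (M % K + 1) ≤ g * K := Nat.mul_le_mul_left g h1
  have h3 : g * (M % K + 1) = g * (M % K) + g := by ring
  omega

lemma div_shift (g D' t m' v : ℕ) (ht : t < g) (hD' : 0 < D') :
    (t + g * m') / (g * D') = v ↔ m' / D' = v := by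
  have hg : 0 < g := Nat.pos_of_ne_zero (by omega)
  rw [div_eq_iff' _ _ _ (Nat.mul_pos hg hD'), div_eq_iff' _ _ _ hD']
  have e1 : g * (v * D') = v * (g * D') := by ring
  constructor
  · rintro ⟨h1, h2⟩
    constructor
    · by_contra hc
      push_neg at hc
      have h3 : g * (m' + 1) ≤ g * (v * D') := Nat.mul_le_mul_left g hc
      have h4 : g * (m' + 1) = g * m' + g := by ring
      omega
    · by_contra hc
      push_neg at hc
      have h3 : g * (v * D' + D') ≤ g * m' := Nat.mul_le_mul_left g hc
      have h4 : g * (v * D' + D') = v * (g * D') + g * D' := by ring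
      omega
  · rintro ⟨h1, h2⟩
    constructor
    · have h3 : g * (v * D') ≤ g * m' := Nat.mul_le_mul_left g h1
      omega
    · have h3 : g * (m' + 1) ≤ g * (v * D' + D') := Nat.mul_le_mul_left g h2
      have h4 : g * (v * D' + D') = v * (g * D') + g * D' := by ring
      have h5 : g * (m' + 1) = g * m' + g := by ring
      omega

lemma innerCount (g D' L v m₀ N D : ℕ) (hN : N = g * (D' * L)) (hD : D = g * D')
    (hg : 0 < g) (hD' : 0 < D') (hL : 0 < L) (hv : v < L) :
    ((range (D' * L)).filter (fun j => ((m₀ + g * j) % N) / D = v)).card = D' := by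
  subst hN hD
  have hK : 0 < D' * L := Nat.mul_pos hD' hL
  have ht : m₀ % g < g := Nat.mod_lt _ hg
  have hpred : ∀ j : ℕ, (((m₀ + g * j) % (g * (D' * L))) / (g * D') = v) ↔
      ((m₀ / g + j) % (D' * L)) / D' = v := by
    intro j
    have e : m₀ + g * j = m₀ % g + g * (m₀ / g + j) := by
      have := Nat.div_add_mod m₀ g
      have e2 : g * (m₀ / g + j) = g * (m₀ / g) + g * j := by ring
      omega
    rw [e, mod_decomp _ _ _ _ ht hK, div_shift _ _ _ _ _ ht hD']
  rw [filter_congr (fun j _ => hpred j)]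
  rw [shiftCount (D' * L) (m₀ / g) hK (fun m => m / D' = v)]
  exact countDiv D' L v hD' hv

lemma sum_mod_period (K g : ℕ) (hK : 0 < K) (h : ℕ → ℕ) :
    ∑ a ∈ range (g * K), h (a % K) = g * ∑ b ∈ range K, h b := by
  rw [show (g : ℕ) * ∑ b ∈ range K, h b = ∑ p ∈ range g ×ˢ range K, h p.2 by
    rw [Finset.sum_product]
    simp [Finset.sum_const, mul_comm]]
  apply Finset.sum_nbij' (i := fun a => (a / K, a % K)) (j := fun p => p.1 * K + p.2)
  · intro a ha
    simp only [mem_range, mem_product] at *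
    exact ⟨(Nat.div_lt_iff_lt_mul hK).mpr ha, Nat.mod_lt _ hK⟩
  · intro p hp
    simp only [mem_range, mem_product] at *
    have := Nat.mul_le_mul_right K (show p.1 + 1 ≤ g by omega)
    have e : (p.1 + 1) * K = p.1 * K + K := by ring
    omega
  · intro a ha
    simp only
    have := Nat.div_add_mod a K
    have e : a / K * K = K * (a / K) := Nat.mul_comm _ _
    omega
  · intro p hp
    simp only [mem_range, mem_product] at hp
    have h1 : (p.1 * K + p.2) / K = p.1 := by
      rw [Nat.add_comm, Nat.add_mul_div_right _ _ hK, Nat.div_eq_of_lt hp.2]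
      omega
    have h2 : (p.1 * K + p.2) % K = p.2 := by
      rw [Nat.add_comm, Nat.add_mul_mod_self_right, Nat.mod_eq_of_lt hp.2]
    simp [h1, h2]
  · intro a ha
    rfl

lemma mul_inj (δ N g K b1 b2 : ℕ) (hg : g = Nat.gcd δ N) (hδ : 0 < δ) (hN : 0 < N)
    (hK : N = g * K) (h1 : b1 < K) (h2 : b2 < K) (heq : b1 * δ % N = b2 * δ % N) :
    b1 = b2 := by
  have hgpos : 0 < g := hg ▸ Nat.gcd_pos_of_pos_left N hδ
  have hgδ : g ∣ δ := hg ▸ Nat.gcd_dvd_left δ N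
  have hcop : Nat.Coprime (δ / g) K := by
    have h := Nat.coprime_div_gcd_div_gcd (hg ▸ hgpos : 0 < Nat.gcd δ N)
    rw [← hg] at h
    rwa [show N / g = K from by rw [hK, Nat.mul_div_cancel_left _ hgpos]] at h
  obtain ⟨δ', hδ'⟩ := hgδ
  have key : ∀ p q : ℕ, p < K → q < K → p ≤ q → p * δ % N = q * δ % N → p = q := by
    intro p q hp hq hle he
    have hmle : p * δ ≤ q * δ := Nat.mul_le_mul_right δ hle
    have hdvd : N ∣ q * δ - p * δ := (Nat.modEq_iff_dvd' hmle).mp he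
    rw [← Nat.sub_mul] at hdvd
    have hdvd2 : g * K ∣ g * ((q - p) * δ') := by
      have e : g * ((q - p) * δ') = (q - p) * δ := by rw [hδ']; ring
      rw [e, ← hK]
      exact hdvd
    have hdvd3 : K ∣ (q - p) * δ' := (Nat.mul_dvd_mul_iff_left hgpos).mp hdvd2
    have hδ'' : δ / g = δ' := by rw [hδ', Nat.mul_div_cancel_left _ hgpos]
    have hKdvd : K ∣ q - p := (Nat.Coprime.dvd_of_dvd_mul_right (by
      rw [← hδ'']; exact hcop.symm) hdvd3)
    rcases Nat.eq_zero_or_pos (q - p) with h0 | h0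
    · omega
    · have := Nat.le_of_dvd h0 hKdvd
      omega
  rcases Nat.le_total b1 b2 with h | h
  · exact key b1 b2 h1 h2 h heq
  · exact (key b2 b1 h2 h1 h heq.symm).symm

lemma count_one (N D L X u : ℕ) (hN : N = D * L) (hD : 0 < D) (hu : u < L) :
    ∑ i ∈ range N, ((range N).filter (fun j => ((i * X + j) % N) / D = u)).card
      = N * D := by
  have hL : 0 < L := by omega
  have hNpos : 0 < N := by rw [hN]; exact Nat.mul_pos hD hL
  have step : ∀ i ∈ range N,
      ((range N).filter (fun j => ((i * X + j) % N) / D = u)).card = D := by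
    intro i _
    rw [shiftCount N (i * X) hNpos (fun m => m / D = u)]
    rw [hN]
    exact countDiv D L u hD hu
  rw [Finset.sum_congr rfl step, Finset.sum_const, card_range, smul_eq_mul]

lemma count_two (N D L g D' δ X u v : ℕ) (hN : N = D * L) (hD : D = g * D')
    (hg : g = Nat.gcd δ N) (hδ : 0 < δ) (hD' : 0 < D')
    (hu : u < L) (hv : v < L) :
    ∑ i ∈ range N, ((range N).filter (fun j =>
        ((i * X + j) % N) / D = u ∧ ((i * X + j + i * δ) % N) / D = v)).card
      = D * D := by
  have hL : 0 < L := by omega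
  have hgpos : 0 < g := hg ▸ Nat.gcd_pos_of_pos_left N hδ
  have hDpos : 0 < D := by rw [hD]; exact Nat.mul_pos hgpos hD'
  have hNpos : 0 < N := by rw [hN]; exact Nat.mul_pos hDpos hL
  have hgδ : g ∣ δ := hg ▸ Nat.gcd_dvd_left δ N
  obtain ⟨δ', hδ'⟩ := hgδ
  set K := D' * L with hKdef
  have hKpos : 0 < K := Nat.mul_pos hD' hL
  have hNgK : N = g * K := by rw [hN, hD]; ring
  set F : ℕ → ℕ := fun e =>
    ((range N).filter (fun m => m / D = u ∧ ((m + e) % N) / D = v)).card with hF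
  have step1 : ∀ i ∈ range N,
      ((range N).filter (fun j =>
        ((i * X + j) % N) / D = u ∧ ((i * X + j + i * δ) % N) / D = v)).card
      = F ((i % K) * δ % N) := by
    intro i _
    have e1 : ∀ j : ℕ, ((i * X + j + i * δ) % N) = (((i * X + j) % N + i * δ) % N) :=
      fun j => (Nat.mod_add_mod (i * X + j) N (i * δ)).symm
    rw [filter_congr (fun j _ => by rw [e1 j])]
    rw [shiftCount N (i * X) hNpos (fun m => m / D = u ∧ ((m + i * δ) % N) / D = v)]
    have e2 : ∀ m : ℕ, ((m + i * δ) % N) = ((m + (i % K) * δ % N) % N) := by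
      intro m
      have hper : i * δ % N = (i % K) * δ % N := by
        have hidm := Nat.div_add_mod i K
        have e3 : i * δ = (i % K) * δ + N * (δ' * (i / K)) := by
          calc i * δ = (K * (i / K) + i % K) * δ := by rw [hidm]
          _ = (i % K) * δ + (K * δ) * (i / K) := by ring
          _ = (i % K) * δ + N * (δ' * (i / K)) := by
              rw [hδ', hNgK]; ring
        rw [e3, Nat.add_mul_mod_self_left]
      rw [← Nat.add_mod_mod, hper, Nat.add_mod_mod, ← Nat.add_mod_mod m ((i % K) * δ) N]
    rw [filter_congr (fun m _ => by rw [e2 m])]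
  rw [Finset.sum_congr rfl step1]
  rw [show (range N) = range (g * K) from by rw [hNgK]]
  rw [sum_mod_period K g hKpos (fun b => F (b * δ % N))]
  have step3 : ∑ b ∈ range K, F (b * δ % N) = ∑ j ∈ range K, F (g * j) := by
    have hgdvd : ∀ b : ℕ, g ∣ b * δ % N := by
      intro b
      rw [Nat.dvd_mod_iff (hNgK ▸ Dvd.intro K rfl)]
      exact Dvd.dvd.mul_left (Dvd.intro δ' hδ'.symm) b
    have hmemmap : ∀ b ∈ range K, b * δ % N / g ∈ range K := by
      intro b hb
      rw [mem_range] at *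
      rw [Nat.div_lt_iff_lt_mul hgpos]
      calc b * δ % N < N := Nat.mod_lt _ hNpos
      _ = K * g := by rw [hNgK]; ring
    have hinj : ∀ b1 ∈ range K, ∀ b2 ∈ range K,
        b1 * δ % N / g = b2 * δ % N / g → b1 = b2 := by
      intro b1 hb1 b2 hb2 he
      rw [mem_range] at hb1 hb2
      apply mul_inj δ N g K b1 b2 hg hδ hNpos hNgK hb1 hb2
      have e1 := Nat.div_mul_cancel (hgdvd b1)
      have e2 := Nat.div_mul_cancel (hgdvd b2)
      rw [← e1, ← e2, he]
    apply Finset.sum_nbij (i := fun b => b * δ % N / g) hmemmap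
    · intro b1 hb1 b2 hb2 he
      exact hinj b1 (by simpa using hb1) b2 (by simpa using hb2) he
    · intro j hj
      have hsurj := Finset.surj_on_of_inj_on_of_card_le
        (s := range K) (t := range K) (fun b _ => b * δ % N / g)
        (fun b hb => hmemmap b hb) (fun b1 b2 hb1 hb2 he => hinj b1 hb1 b2 hb2 he)
        le_rfl
      obtain ⟨b, hb, he⟩ := hsurj j (by simpa using hj)
      exact ⟨b, by simpa using hb, he.symm⟩
    · intro b hb
      rw [Nat.mul_div_cancel' (hgdvd b)]
  rw [step3]
  have step4 : ∑ j ∈ range K, F (g * j) = D' * D := by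
    have expand : ∀ j ∈ range K, F (g * j) =
        ∑ m ∈ range N, (if m / D = u ∧ ((m + g * j) % N) / D = v then 1 else 0) := by
      intro j _
      rw [hF]
      exact Finset.card_filter _ _
    rw [Finset.sum_congr rfl expand, Finset.sum_comm]
    have inner : ∀ m ∈ range N,
        (∑ j ∈ range K, if m / D = u ∧ ((m + g * j) % N) / D = v then 1 else 0)
        = if m / D = u then D' else 0 := by
      intro m _
      by_cases hm : m / D = u
      · simp only [hm, true_and, if_true]
        rw [← Finset.card_filter]
        exact innerCount g D' L v m N D (by rw [hNgK]) hD hgpos hD' hL hv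
      · simp [hm]
    rw [Finset.sum_congr rfl inner, ← Finset.sum_filter, Finset.sum_const, smul_eq_mul]
    rw [show (range N) = range (D * L) from by rw [hN], countDiv D L u hDpos hu]
    ring
  rw [step4, hD]
  ring

lemma prob_count {Ω : Type*} [MeasureSpace Ω] [IsProbabilityMeasure (ℙ : Measure Ω)]
    {N : ℕ} (hN : 0 < N) (a c : Ω → Fin N)
    (hindep : ∀ s t : Fin N,
      ℙ {ω | a ω = s ∧ c ω = t} = ℙ {ω | a ω = s} * ℙ {ω | c ω = t})
    (haunif : ∀ s, ℙ {ω | a ω = s} = 1 / (N : ℝ≥0∞))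
    (hcunif : ∀ t, ℙ {ω | c ω = t} = 1 / (N : ℝ≥0∞))
    (P : Fin N → Fin N → Prop) [DecidablePred fun p : Fin N × Fin N => P p.1 p.2] :
    ℙ {ω | P (a ω) (c ω)} =
      ((Finset.univ.filter fun p : Fin N × Fin N => P p.1 p.2).card : ℝ≥0∞)
        / ((N : ℝ≥0∞) * N) := by
  classical
  have hNne : (N : ℝ≥0∞) ≠ 0 := by exact_mod_cast hN.ne'
  have hNtop : (N : ℝ≥0∞) ≠ ⊤ := ENNReal.natCast_ne_top N
  have hNN0 : (N : ℝ≥0∞) * N ≠ 0 := mul_ne_zero hNne hNne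
  have hNNtop : (N : ℝ≥0∞) * N ≠ ⊤ := ENNReal.mul_ne_top hNtop hNtop
  have hpair : ∀ s t : Fin N, ℙ {ω | a ω = s ∧ c ω = t} = 1 / ((N : ℝ≥0∞) * N) := by
    intro s t
    rw [hindep s t, haunif s, hcunif t, one_div, one_div]
    exact (ENNReal.mul_inv (Or.inl hNne) (Or.inr hNne)).symm
  have upper : ∀ S : Finset (Fin N × Fin N),
      ℙ {ω | (a ω, c ω) ∈ S} ≤ (S.card : ℝ≥0∞) / ((N : ℝ≥0∞) * N) := by
    intro S
    have hset : {ω | (a ω, c ω) ∈ S} = ⋃ p ∈ S, {ω | a ω = p.1 ∧ c ω = p.2} := by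
      ext ω
      simp only [Set.mem_setOf_eq, Set.mem_iUnion, exists_prop]
      constructor
      · intro h; exact ⟨(a ω, c ω), h, rfl, rfl⟩
      · rintro ⟨⟨p1, p2⟩, hp, h1, h2⟩; rw [h1, h2]; exact hp
    rw [hset]
    refine le_trans (measure_biUnion_finset_le S _) ?_
    rw [Finset.sum_congr rfl (fun p _ => hpair p.1 p.2), Finset.sum_const,
      nsmul_eq_mul, mul_one_div]
  set S := Finset.univ.filter fun p : Fin N × Fin N => P p.1 p.2 with hS
  set T := Finset.univ.filter fun p : Fin N × Fin N => ¬ P p.1 p.2 with hT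
  have hES : {ω | P (a ω) (c ω)} = {ω | (a ω, c ω) ∈ S} := by
    ext ω; simp [hS]
  have hET : {ω | P (a ω) (c ω)}ᶜ = {ω | (a ω, c ω) ∈ T} := by
    ext ω; simp [hT]
  have hcardsum : S.card + T.card = N * N := by
    rw [hS, hT, Finset.card_filter_add_card_filter_not]
    simp [Fintype.card_prod]
  have hsum1 : (S.card : ℝ≥0∞) / ((N : ℝ≥0∞) * N) + (T.card : ℝ≥0∞) / ((N : ℝ≥0∞) * N)
      = 1 := by
    rw [ENNReal.div_add_div_same]
    rw [show ((S.card : ℝ≥0∞) + T.card) = ((N : ℝ≥0∞) * N) by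
      rw [← Nat.cast_add, hcardsum]; push_cast; ring]
    exact ENNReal.div_self hNN0 hNNtop
  have up1 : ℙ {ω | P (a ω) (c ω)} ≤ (S.card : ℝ≥0∞) / ((N : ℝ≥0∞) * N) := by
    rw [hES]; exact upper S
  have up2 : ℙ {ω | P (a ω) (c ω)}ᶜ ≤ (T.card : ℝ≥0∞) / ((N : ℝ≥0∞) * N) := by
    rw [hET]; exact upper T
  have hone : (1 : ℝ≥0∞) ≤ ℙ {ω | P (a ω) (c ω)} + (T.card : ℝ≥0∞) / ((N : ℝ≥0∞) * N) := by
    calc (1 : ℝ≥0∞) = ℙ (Set.univ : Set Ω) := (measure_univ).symm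
    _ = ℙ ({ω | P (a ω) (c ω)} ∪ {ω | P (a ω) (c ω)}ᶜ) := by
        rw [Set.union_compl_self]
    _ ≤ ℙ {ω | P (a ω) (c ω)} + ℙ {ω | P (a ω) (c ω)}ᶜ := measure_union_le _ _
    _ ≤ _ := by exact add_le_add le_rfl up2
  have hTtop : (T.card : ℝ≥0∞) / ((N : ℝ≥0∞) * N) ≠ ⊤ := by
    refine ne_top_of_le_ne_top ENNReal.one_ne_top ?_
    rw [← hsum1]; exact le_add_self
  have low : (S.card : ℝ≥0∞) / ((N : ℝ≥0∞) * N) ≤ ℙ {ω | P (a ω) (c ω)} := by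
    rw [ENNReal.eq_sub_of_add_eq hTtop hsum1]
    exact tsub_le_iff_right.mpr hone
  exact le_antisymm up1 low

lemma card_fin_pair {N : ℕ} (R : ℕ → ℕ → Prop) [DecidablePred fun p : ℕ × ℕ => R p.1 p.2]
    [∀ i, DecidablePred (R i)] :
    (Finset.univ.filter (fun p : Fin N × Fin N => R p.1.val p.2.val)).card
      = ∑ i ∈ Finset.range N, ((Finset.range N).filter (fun j => R i j)).card := by
  classical
  rw [Finset.card_filter, Fintype.sum_prod_type]
  rw [Fin.sum_univ_eq_sum_range (fun i => ∑ y : Fin N, if R i y.val then 1 else 0)]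
  refine Finset.sum_congr rfl fun i _ => ?_
  rw [Finset.card_filter, Fin.sum_univ_eq_sum_range (fun j => if R i j then 1 else 0)]

lemma card_div (m k n : ℕ) (hm : 0 < m) (h : m * k = n) :
    ((m : ℝ≥0∞)) / ((n : ℕ) : ℝ≥0∞) = 1 / (k : ℝ≥0∞) := by
  subst h
  push_cast
  have hne : (m : ℝ≥0∞) ≠ 0 := by exact_mod_cast hm.ne'
  have htop : (m : ℝ≥0∞) ≠ ⊤ := ENNReal.natCast_ne_top m
  calc (m : ℝ≥0∞) / ((m : ℝ≥0∞) * k) = (m : ℝ≥0∞) * 1 / ((m : ℝ≥0∞) * k) := by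
        rw [mul_one]
  _ = 1 / k := ENNReal.mul_div_mul_left 1 k hne htop

end helpers

/-- The multiply-add-shift hash function: for parameters `a, c ∈ [2^(2w)]` and input
`x ∈ [2^w]`, compute `(a·x + c) mod 2^(2w)` and keep the top `ℓ` bits, i.e. divide by
`2^(2w−ℓ)` (integer division). -/
def multiplyAddShift (w ℓ : ℕ) (hl : ℓ ≤ w) (a c : Fin (2^(2*w))) (x : Fin (2^w)) :
    Fin (2^ℓ) :=
  ⟨(a.val * x.val + c.val) % 2^(2*w) / 2^(2*w - ℓ), by
    apply Nat.div_lt_of_lt_mul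
    calc (a.val * x.val + c.val) % 2^(2*w) < 2^(2*w) :=
          Nat.mod_lt _ (pow_pos (by norm_num) _)
      _ = 2^(2*w - ℓ) * 2^ℓ := by rw [← pow_add]; congr 1; omega⟩

/-- The multiply-add-shift family is 2-wise independent: with `a, c` independent and
each uniform on `Fin (2^(2w))`, every hash value `h_{a,c}(x)` is uniform on
`Fin (2^ℓ)`, and for `x ≠ y` the pair of hash values is uniform on
`Fin (2^ℓ) × Fin (2^ℓ)`, i.e. `Pr[h(x) = u ∧ h(y) = v] = 2^(−2ℓ)`. -/
theorem multiplyAddShift_two_wise_independent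
    {Ω : Type*} [MeasureSpace Ω] [IsProbabilityMeasure (ℙ : Measure Ω)]
    (w ℓ : ℕ) (hw : 0 < w) (hl : ℓ ≤ w)
    (a c : Ω → Fin (2^(2*w)))
    -- a and c are independent:
    (hindep : ∀ s t : Fin (2^(2*w)),
      ℙ {ω | a ω = s ∧ c ω = t} = ℙ {ω | a ω = s} * ℙ {ω | c ω = t})
    -- a and c are each uniformly distributed on Fin (2^(2w)):
    (haunif : ∀ s, ℙ {ω | a ω = s} = 1 / (2^(2*w) : ℝ≥0∞))
    (hcunif : ∀ t, ℙ {ω | c ω = t} = 1 / (2^(2*w) : ℝ≥0∞)) :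
    (∀ (x : Fin (2^w)) (u : Fin (2^ℓ)),
      ℙ {ω | multiplyAddShift w ℓ hl (a ω) (c ω) x = u} = 1 / (2^ℓ : ℝ≥0∞)) ∧
    (∀ x y : Fin (2^w), x ≠ y → ∀ u v : Fin (2^ℓ),
      ℙ {ω | multiplyAddShift w ℓ hl (a ω) (c ω) x = u ∧
             multiplyAddShift w ℓ hl (a ω) (c ω) y = v} = 1 / (2^(2*ℓ) : ℝ≥0∞)) := by
    classical
  have hNpos : 0 < 2^(2*w) := Nat.pow_pos (by norm_num)
  have hDpos : 0 < 2^(2*w - ℓ) := Nat.pow_pos (by norm_num)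
  have hN : 2^(2*w) = 2^(2*w - ℓ) * 2^ℓ := by
    rw [← pow_add]; congr 1; omega
  have hcast1 : (1 : ℝ≥0∞) / ((2^(2*w) : ℕ) : ℝ≥0∞) = 1 / (2^(2*w) : ℝ≥0∞) := by
    push_cast; ring_nf
  have haunif' : ∀ s, ℙ {ω | a ω = s} = 1 / ((2^(2*w) : ℕ) : ℝ≥0∞) := by
    intro s; rw [haunif s, ← hcast1]
  have hcunif' : ∀ t, ℙ {ω | c ω = t} = 1 / ((2^(2*w) : ℕ) : ℝ≥0∞) := by
    intro t; rw [hcunif t, ← hcast1]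
  constructor
  · intro x u
    rw [prob_count hNpos a c hindep haunif' hcunif'
      (fun s t => multiplyAddShift w ℓ hl s t x = u)]
    have hiff : ∀ p : Fin (2^(2*w)) × Fin (2^(2*w)),
        (multiplyAddShift w ℓ hl p.1 p.2 x = u) ↔
        ((p.1.val * x.val + p.2.val) % 2^(2*w)) / 2^(2*w - ℓ) = u.val := by
      intro p
      rw [Fin.ext_iff]
      exact Iff.rfl
    rw [Finset.filter_congr (fun p _ => hiff p)]
    rw [card_fin_pair (fun i j => ((i * x.val + j) % 2^(2*w)) / 2^(2*w - ℓ) = u.val)]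
    rw [count_one (2^(2*w)) (2^(2*w - ℓ)) (2^ℓ) x.val u.val hN hDpos u.isLt]
    rw [show (((2^(2*w) : ℕ) : ℝ≥0∞) * ((2^(2*w) : ℕ) : ℝ≥0∞))
        = ((2^(2*w) * 2^(2*w) : ℕ) : ℝ≥0∞) from by push_cast; ring]
    rw [card_div (2^(2*w) * 2^(2*w - ℓ)) (2^ℓ) (2^(2*w) * 2^(2*w))
      (Nat.mul_pos hNpos hDpos)
      (by rw [← pow_add, ← pow_add, ← pow_add]; congr 1; omega)]
    push_cast
    ring
  · intro x y hxy u v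
    have hXN : x.val < 2^(2*w) :=
      lt_of_lt_of_le x.isLt (Nat.pow_le_pow_right (by norm_num) (by omega))
    have hYN : y.val < 2^(2*w) :=
      lt_of_lt_of_le y.isLt (Nat.pow_le_pow_right (by norm_num) (by omega))
    set X := x.val with hXdef
    set Y := y.val with hYdef
    set δ : ℕ := 2^(2*w) + Y - X with hδdef
    have hδpos : 0 < δ := by omega
    have hXδ : X + δ = 2^(2*w) + Y := by omega
    set g : ℕ := Nat.gcd δ (2^(2*w)) with hgdef
    have hgpos : 0 < g := Nat.gcd_pos_of_pos_left _ hδpos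
    have hXY : X ≠ Y := fun h => hxy (Fin.ext h)
    have hgD : g ∣ 2^(2*w - ℓ) := by
      have hgN : g ∣ 2^(2*w) := Nat.gcd_dvd_right δ _
      have hgδ : g ∣ δ := Nat.gcd_dvd_left δ _
      have hm : g ∣ (if X ≤ Y then Y - X else X - Y) := by
        split_ifs with h
        · have := Nat.dvd_sub hgδ hgN
          rwa [show δ - 2^(2*w) = Y - X from by omega] at this
        · have := Nat.dvd_sub hgN hgδ
          rwa [show 2^(2*w) - δ = X - Y from by omega] at this
      have hmpos : 0 < (if X ≤ Y then Y - X else X - Y) := by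
        split_ifs with h <;> omega
      have hmlt : (if X ≤ Y then Y - X else X - Y) < 2^w := by
        have hx := x.isLt
        have hy := y.isLt
        split_ifs with h <;> omega
      have hglt : g < 2^w := lt_of_le_of_lt (Nat.le_of_dvd hmpos hm) hmlt
      obtain ⟨k, hk, hgk⟩ := (Nat.dvd_prime_pow Nat.prime_two).mp hgN
      have hkw : k < w := by
        by_contra hc
        push_neg at hc
        have : 2^w ≤ 2^k := Nat.pow_le_pow_right (by norm_num) hc
        omega
      rw [hgk]
      exact pow_dvd_pow 2 (by omega)
    set D' : ℕ := 2^(2*w - ℓ) / g with hD'def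
    have hDD' : 2^(2*w - ℓ) = g * D' := (Nat.mul_div_cancel' hgD).symm
    have hD'pos : 0 < D' := by
      rcases Nat.eq_zero_or_pos D' with h | h
      · rw [h, Nat.mul_zero] at hDD'; omega
      · exact h
    rw [prob_count hNpos a c hindep haunif' hcunif'
      (fun s t => multiplyAddShift w ℓ hl s t x = u ∧ multiplyAddShift w ℓ hl s t y = v)]
    have hiff : ∀ p : Fin (2^(2*w)) × Fin (2^(2*w)),
        (multiplyAddShift w ℓ hl p.1 p.2 x = u ∧ multiplyAddShift w ℓ hl p.1 p.2 y = v) ↔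
        (((p.1.val * X + p.2.val) % 2^(2*w)) / 2^(2*w - ℓ) = u.val ∧
          ((p.1.val * X + p.2.val + p.1.val * δ) % 2^(2*w)) / 2^(2*w - ℓ) = v.val) := by
      intro p
      have hmod : ∀ i j : ℕ, (i * X + j + i * δ) % 2^(2*w) = (i * Y + j) % 2^(2*w) := by
        intro i j
        rw [show i * X + j + i * δ = (i * Y + j) + 2^(2*w) * i from by
          calc i * X + j + i * δ = i * (X + δ) + j := by ring
          _ = i * (2^(2*w) + Y) + j := by rw [hXδ]
          _ = (i * Y + j) + 2^(2*w) * i := by ring]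
        rw [Nat.add_mul_mod_self_left]
      rw [Fin.ext_iff, Fin.ext_iff, hmod p.1.val p.2.val]
      exact Iff.rfl
    rw [Finset.filter_congr (fun p _ => hiff p)]
    rw [card_fin_pair (fun i j => ((i * X + j) % 2^(2*w)) / 2^(2*w - ℓ) = u.val ∧
      ((i * X + j + i * δ) % 2^(2*w)) / 2^(2*w - ℓ) = v.val)]
    rw [count_two (2^(2*w)) (2^(2*w - ℓ)) (2^ℓ) g D' δ X u.val v.val hN hDD' hgdef
      hδpos hD'pos u.isLt v.isLt]
    rw [show (((2^(2*w) : ℕ) : ℝ≥0∞) * ((2^(2*w) : ℕ) : ℝ≥0∞))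
        = ((2^(2*w) * 2^(2*w) : ℕ) : ℝ≥0∞) from by push_cast; ring]
    rw [card_div (2^(2*w - ℓ) * 2^(2*w - ℓ)) (2^(2*ℓ)) (2^(2*w) * 2^(2*w))
      (Nat.mul_pos hDpos hDpos)
      (by rw [← pow_add, ← pow_add, ← pow_add]; congr 1; omega)]
    push_cast
    ring
end
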